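/- arXiv:2208.11093 — 9 statements merged into one kernel-verified Lean document; each statement's English description precedes it below -/
import Mathlib

section
/- For 0 < x < k and p, k > 0, the p-k gamma function satisfies the reflection formula ₚΓₖ(x) · ₚΓₖ(k - x) = (p/k²) · π / sin(πx/k). -/
open MeasureTheory Real

noncomputable def pkGamma (p k x : ℝ) : ℝ :=
  ∫ t in Set.Ioi (0:ℝ), Real.exp (-(t ^ k) / p) * t ^ (x - 1)

lemma pkGamma_eq_Gamma (p k x : ℝ) (hp : 0 < p) (hk : 0 < k) (hx : 0 < x) :
    pkGamma p k x = p ^ (x / k) / k * Real.Gamma (x / k) := by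
  unfold pkGamma
  have h := integral_rpow_mul_exp_neg_mul_rpow (p := k) (q := x - 1) (b := p⁻¹)
    hk (by linarith) (inv_pos.2 hp)
  rw [show (∫ t in Set.Ioi (0:ℝ), Real.exp (-(t ^ k) / p) * t ^ (x - 1)) =
      ∫ t in Set.Ioi (0:ℝ), t ^ (x - 1) * Real.exp (-p⁻¹ * t ^ k) from
    congrArg _ (funext fun t => by rw [mul_comm]; congr 2; ring)]
  rw [h, sub_add_cancel, ← Real.rpow_neg_one p, ← Real.rpow_mul hp.le,
    show (-1 : ℝ) * (-x / k) = x / k by ring]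
  ring

theorem pkGamma_reflection (p k x : ℝ) (hp : 0 < p) (hk : 0 < k)
    (hx : 0 < x) (hxk : x < k) :
    pkGamma p k x * pkGamma p k (k - x) =
      p / k ^ 2 * (Real.pi / Real.sin (Real.pi * x / k)) := by
  rw [pkGamma_eq_Gamma p k x hp hk hx, pkGamma_eq_Gamma p k (k - x) hp hk (by linarith)]
  have h1 : (k - x) / k = 1 - x / k := by field_simp
  have h2 : p ^ (x / k) * p ^ (1 - x / k) = p := by
    rw [← Real.rpow_add hp]; simp
  have h3 := Real.Gamma_mul_Gamma_one_sub (x / k)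
  rw [h1]
  have h4 : Real.pi * (x / k) = Real.pi * x / k := by ring
  calc p ^ (x / k) / k * Real.Gamma (x / k) *
        (p ^ (1 - x / k) / k * Real.Gamma (1 - x / k))
      = (p ^ (x / k) * p ^ (1 - x / k)) / k ^ 2 *
        (Real.Gamma (x / k) * Real.Gamma (1 - x / k)) := by ring
    _ = p / k ^ 2 * (Real.pi / Real.sin (Real.pi * x / k)) := by
        rw [h2, h3, h4]
end

section
/- For x > 0 and p, k > 0, the p-k Nielsen beta function satisfies the functional equation ₚβₖ(x + k) = p/x − ₚβₖ(x). -/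
open Real

noncomputable def pkBeta (p k x : ℝ) : ℝ :=
  (p / k) * ∫ t in (0:ℝ)..1, t ^ (x / k - 1) / (1 + t)

lemma aux_integrable (a : ℝ) (ha : -1 < a) :
    IntervalIntegrable (fun t : ℝ => t ^ a / (1 + t)) MeasureTheory.volume 0 1 := by
  have hg : IntervalIntegrable (fun t : ℝ => t ^ a) MeasureTheory.volume 0 1 :=
    intervalIntegral.intervalIntegrable_rpow' ha
  apply hg.mono_fun
  · exact (by fun_prop : Measurable fun t : ℝ => t ^ a / (1 + t)).aestronglyMeasurable
  · rw [Set.uIoc_of_le (by norm_num : (0:ℝ) ≤ 1)]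
    filter_upwards [MeasureTheory.ae_restrict_mem measurableSet_Ioc] with t ht
    obtain ⟨ht0, ht1⟩ := ht
    have h1 : (0:ℝ) < 1 + t := by linarith
    have h2 : (0:ℝ) ≤ t ^ a := rpow_nonneg ht0.le a
    rw [Real.norm_eq_abs, Real.norm_eq_abs, abs_of_nonneg (div_nonneg h2 h1.le),
      abs_of_nonneg h2]
    rw [div_le_iff₀ h1]
    nlinarith

theorem pkBeta_functional_eq (p k x : ℝ) (hp : 0 < p) (hk : 0 < k) (hx : 0 < x) :
    pkBeta p k (x + k) = p / x - pkBeta p k x := by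
  set a : ℝ := x / k - 1 with ha_def
  have hk' : k ≠ 0 := hk.ne'
  have ha1 : a + 1 = x / k := by simp [ha_def]
  have hxk : 0 < x / k := div_pos hx hk
  have ha : -1 < a := by simp [ha_def]; linarith
  have ha' : -1 < a + 1 := by linarith
  have hI1 := aux_integrable a ha
  have hI2 := aux_integrable (a + 1) ha'
  have hsum : (∫ t in (0:ℝ)..1, t ^ (a + 1) / (1 + t)) +
      (∫ t in (0:ℝ)..1, t ^ a / (1 + t)) = k / x := by
    rw [← intervalIntegral.integral_add hI2 hI1]
    have hcong : ∀ t ∈ Set.uIcc (0:ℝ) 1,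
        t ^ (a + 1) / (1 + t) + t ^ a / (1 + t) = t ^ a := by
      intro t ht
      rw [Set.uIcc_of_le (by norm_num : (0:ℝ) ≤ 1)] at ht
      obtain ⟨ht0, ht1⟩ := ht
      rcases eq_or_lt_of_le ht0 with h | h
      · subst h
        simp [Real.zero_rpow (by linarith : a + 1 ≠ 0)]
      · have h1 : (0:ℝ) < 1 + t := by linarith
        rw [Real.rpow_add_one h.ne']
        field_simp
        ring
    rw [intervalIntegral.integral_congr hcong, integral_rpow (Or.inl ha)]
    rw [Real.zero_rpow (by linarith : a + 1 ≠ 0), ha1]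
    rw [Real.one_rpow]
    field_simp
    try ring
  have harg : (x + k) / k - 1 = a + 1 := by
    rw [ha1]; field_simp; ring
  unfold pkBeta
  rw [harg, ← ha_def]
  have hfin : (∫ t in (0:ℝ)..1, t ^ (a+1) / (1 + t)) =
      k / x - (∫ t in (0:ℝ)..1, t ^ a / (1 + t)) := by linarith
  rw [hfin]
  field_simp
end

section
/- For x > 0 and p, k > 0, the p-k Nielsen beta function admits the series representation ₚβₖ(x) = (p/k) Σ_{n=0}^∞ (k/(2nk + x) − k/(2nk + x + k)). -/
open Real

open MeasureTheory Set


lemma int_rpow (c : ℝ) (hc : -1 < c) : ∫ t in (0:ℝ)..1, t ^ c = 1 / (c + 1) := by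
  rw [integral_rpow (Or.inl hc)]
  rw [Real.one_rpow, Real.zero_rpow (by linarith)]
  ring

lemma key (a : ℝ) (ha : 0 < a) :
    ∫ t in (0:ℝ)..1, t ^ (a - 1) / (1 + t)
      = ∑' n : ℕ, (1 / (2 * (n : ℝ) + a) - 1 / (2 * (n : ℝ) + a + 1)) := by
  set F : ℕ → ℝ → ℝ := fun n t => t ^ (2 * (n : ℝ) + a - 1) - t ^ (2 * (n : ℝ) + a) with hF
  have hpos : ∀ n : ℕ, (0:ℝ) < 2 * (n : ℝ) + a := by
    intro n; positivity
  have hII : ∀ n : ℕ, IntervalIntegrable (F n) volume 0 1 := by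
    intro n
    exact (intervalIntegral.intervalIntegrable_rpow' (by push_cast; linarith [hpos n])).sub
      (intervalIntegral.intervalIntegrable_rpow' (by linarith [hpos n]))
  have hval : ∀ n : ℕ, ∫ t in Ioo (0:ℝ) 1, F n t
      = 1 / (2 * (n : ℝ) + a) - 1 / (2 * (n : ℝ) + a + 1) := by
    intro n
    rw [← integral_Ioc_eq_integral_Ioo, ← intervalIntegral.integral_of_le (by norm_num : (0:ℝ) ≤ 1)]
    rw [intervalIntegral.integral_sub (intervalIntegral.intervalIntegrable_rpow' (by linarith [hpos n]))
      (intervalIntegral.intervalIntegrable_rpow' (by linarith [hpos n])),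
      int_rpow _ (by linarith [hpos n]), int_rpow _ (by linarith [hpos n])]
    ring_nf
  have hInt : ∀ n : ℕ, IntegrableOn (F n) (Ioo (0:ℝ) 1) := by
    intro n
    exact ((intervalIntegrable_iff_integrableOn_Ioc_of_le (by norm_num)).mp (hII n)).mono_set
      Ioo_subset_Ioc_self
  have hFnn : ∀ n : ℕ, ∀ t ∈ Ioo (0:ℝ) 1, 0 ≤ F n t := by
    intro n t ht
    have := Real.rpow_le_rpow_of_exponent_ge ht.1 ht.2.le
      (by linarith : 2 * (n : ℝ) + a - 1 ≤ 2 * (n : ℝ) + a)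
    simpa [hF] using sub_nonneg.mpr this
  have hSum : Summable (fun n : ℕ => 1 / (2 * (n : ℝ) + a) - 1 / (2 * (n : ℝ) + a + 1)) := by
    apply summable_of_sum_range_le (c := 1 / a)
    · intro n
      have h1 : (0:ℝ) < 2 * (n : ℝ) + a := hpos n
      have h2 : (0:ℝ) < 2 * (n : ℝ) + a + 1 := by linarith
      rw [sub_nonneg]
      apply one_div_le_one_div_of_le h1; linarith
    · intro N
      calc ∑ n ∈ Finset.range N, (1 / (2 * (n : ℝ) + a) - 1 / (2 * (n : ℝ) + a + 1))
          ≤ ∑ n ∈ Finset.range N, (1 / (2 * (n : ℝ) + a) - 1 / (2 * ((n:ℝ) + 1) + a)) := by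
            apply Finset.sum_le_sum
            intro n _
            have h2 : (0:ℝ) < 2 * (n : ℝ) + a + 1 := by linarith [hpos n]
            have := one_div_le_one_div_of_le h2 (by linarith : 2 * (n:ℝ) + a + 1 ≤ 2 * ((n:ℝ)+1) + a)
            linarith
        _ = 1 / (2 * ((0:ℕ):ℝ) + a) - 1 / (2 * ((N:ℕ):ℝ) + a) := by
            have := Finset.sum_range_sub' (f := fun n : ℕ => 1 / (2 * (n:ℝ) + a)) N
            simpa [Nat.cast_succ, mul_add] using this
        _ ≤ 1 / a := by
            simp only [Nat.cast_zero, mul_zero, zero_add]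
            have := one_div_nonneg.mpr (hpos N).le
            linarith
  have hnorm : Summable fun n : ℕ => ∫ t in Ioo (0:ℝ) 1, ‖F n t‖ := by
    apply hSum.congr
    intro n
    rw [← hval n]
    apply setIntegral_congr_fun measurableSet_Ioo
    intro t ht
    exact (Real.norm_of_nonneg (hFnn n t ht)).symm
  have hts : ∀ t ∈ Ioo (0:ℝ) 1, ∑' n : ℕ, F n t = t ^ (a - 1) / (1 + t) := by
    intro t ht
    have ht0 : 0 < t := ht.1
    have ht1 : t < 1 := ht.2
    have hFt : ∀ n : ℕ, F n t = (t ^ 2) ^ n * (t ^ (a - 1) - t ^ a) := by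
      intro n
      have e1 : t ^ (2 * (n : ℝ) + a - 1) = (t ^ 2) ^ n * t ^ (a - 1) := by
        rw [show 2 * (n : ℝ) + a - 1 = ((2 * n : ℕ) : ℝ) + (a - 1) by push_cast; ring,
          Real.rpow_add ht0, Real.rpow_natCast, pow_mul]
      have e2 : t ^ (2 * (n : ℝ) + a) = (t ^ 2) ^ n * t ^ a := by
        rw [show 2 * (n : ℝ) + a = ((2 * n : ℕ) : ℝ) + a by push_cast; ring,
          Real.rpow_add ht0, Real.rpow_natCast, pow_mul]
      simp [hF, e1, e2, mul_sub]
    have hr : t ^ 2 < 1 := by nlinarith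
    have hr0 : (0:ℝ) ≤ t ^ 2 := by positivity
    calc ∑' n : ℕ, F n t = ∑' n : ℕ, (t ^ 2) ^ n * (t ^ (a - 1) - t ^ a) := by
          exact tsum_congr fun n => hFt n
      _ = (1 - t ^ 2)⁻¹ * (t ^ (a - 1) - t ^ a) := by
          rw [tsum_mul_right, tsum_geometric_of_lt_one hr0 hr]
      _ = t ^ (a - 1) / (1 + t) := by
          have hta : t ^ a = t ^ (a - 1) * t := by
            rw [show a = (a-1)+1 by ring, Real.rpow_add ht0, Real.rpow_one]; ring_nf
          rw [hta]
          have h1 : (1:ℝ) - t ^ 2 ≠ 0 := by nlinarith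
          have h2 : (1:ℝ) + t ≠ 0 := by nlinarith
          field_simp
          ring
  rw [intervalIntegral.integral_of_le (by norm_num : (0:ℝ) ≤ 1), integral_Ioc_eq_integral_Ioo]
  calc ∫ t in Ioo (0:ℝ) 1, t ^ (a - 1) / (1 + t)
      = ∫ t in Ioo (0:ℝ) 1, ∑' n : ℕ, F n t :=
        setIntegral_congr_fun measurableSet_Ioo fun t ht => (hts t ht).symm
    _ = ∑' n : ℕ, ∫ t in Ioo (0:ℝ) 1, F n t :=
        (integral_tsum_of_summable_integral_norm hInt hnorm).symm
    _ = _ := tsum_congr hval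


theorem pkBeta_series (p k x : ℝ) (hp : 0 < p) (hk : 0 < k) (hx : 0 < x) :
    pkBeta p k x =
      (p / k) * ∑' n : ℕ,
        (k / (2 * (n : ℝ) * k + x) - k / (2 * (n : ℝ) * k + x + k)) := by
  unfold pkBeta
  rw [key (x / k) (div_pos hx hk)]
  congr 1
  apply tsum_congr
  intro n
  have h1 : (0:ℝ) < 2 * (n:ℝ) * k + x := by positivity
  have h2 : (0:ℝ) < 2 * (n:ℝ) * k + x + k := by positivity
  have h3 : (0:ℝ) < 2 * (n:ℝ) + x / k := by positivity
  have h4 : (0:ℝ) < 2 * (n:ℝ) + x / k + 1 := by positivity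
  rw [div_sub_div _ _ h3.ne' h4.ne', div_sub_div _ _ h1.ne' h2.ne']
  rw [div_eq_div_iff (by positivity) (by positivity)]
  field_simp
end

section
/- For p, k > 0, the p-k Nielsen beta function ₚβₖ(x) = (p/k) ∫₀¹ t^{x/k−1}/(1+t) dt is logarithmically convex on (0, ∞): for x, y > 0 and r, s > 1 with 1/r + 1/s = 1, one has ₚβₖ(x/r + y/s) ≤ ₚβₖ(x)^{1/r} · ₚβₖ(y)^{1/s}. -/
open Real MeasureTheory Set

lemma pkAux_contOn (c : ℝ) : ContinuousOn (fun t : ℝ => t ^ c / (1 + t)) (Ioc (0:ℝ) 1) := by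
  apply ContinuousOn.div
  · exact fun t ht => (Real.continuousAt_rpow_const _ _ (Or.inl ht.1.ne')).continuousWithinAt
  · exact (continuous_const.add continuous_id).continuousOn
  · intro t ht; exact ne_of_gt (by linarith [ht.1])

lemma pkAux_integrable (k u : ℝ) (hu : 0 < u / k) :
    IntegrableOn (fun t : ℝ => t ^ (u / k - 1) / (1 + t)) (Ioc 0 1) := by
  have h1 : IntegrableOn (fun t : ℝ => t ^ (u / k - 1)) (Ioc (0:ℝ) 1) := by
    have := intervalIntegral.intervalIntegrable_rpow' (a := (0:ℝ)) (b := 1)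
        (r := u / k - 1) (by linarith)
    rwa [intervalIntegrable_iff_integrableOn_Ioc_of_le zero_le_one] at this
  refine h1.mono' ?_ ?_
  · exact (pkAux_contOn (u / k - 1)).aestronglyMeasurable measurableSet_Ioc
  · filter_upwards [ae_restrict_mem measurableSet_Ioc] with t ht
    have h0 : (0:ℝ) ≤ t ^ (u / k - 1) := rpow_nonneg ht.1.le _
    have h2 : (0:ℝ) ≤ t ^ (u / k - 1) / (1 + t) := by
      apply div_nonneg h0; linarith [ht.1]
    rw [norm_of_nonneg h2]
    exact div_le_self h0 (by linarith [ht.1])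

lemma pkAux_memLp (k u c : ℝ) (hu : 0 < u / k) (hc : 0 < c) :
    MemLp (fun t : ℝ => (t ^ (u / k - 1) / (1 + t)) ^ (1 / c)) (ENNReal.ofReal c)
      (volume.restrict (Ioc (0:ℝ) 1)) := by
  have A : ENNReal.ofReal c ≠ 0 := by
    simp [ENNReal.ofReal_eq_zero, not_le, hc]
  have B : ENNReal.ofReal c ≠ ⊤ := ENNReal.ofReal_ne_top
  have hmeas : AEStronglyMeasurable
      (fun t : ℝ => (t ^ (u / k - 1) / (1 + t)) ^ (1 / c))
      (volume.restrict (Ioc (0:ℝ) 1)) := by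
    exact ((pkAux_contOn (u / k - 1)).rpow_const
      (fun t _ => Or.inr (by positivity))).aestronglyMeasurable measurableSet_Ioc
  rw [← memLp_norm_rpow_iff hmeas A B, ENNReal.toReal_ofReal hc.le,
    ENNReal.div_self A B, memLp_one_iff_integrable]
  apply Integrable.congr (pkAux_integrable k u hu)
  filter_upwards [ae_restrict_mem measurableSet_Ioc] with t ht
  have h2 : (0:ℝ) ≤ t ^ (u / k - 1) / (1 + t) := by
    apply div_nonneg (rpow_nonneg ht.1.le _); linarith [ht.1]
  rw [norm_of_nonneg (rpow_nonneg h2 _), ← rpow_mul h2, one_div_mul_cancel hc.ne', rpow_one]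

theorem pkBeta_logConvex (p k : ℝ) (hp : 0 < p) (hk : 0 < k)
    (x y r s : ℝ) (hx : 0 < x) (hy : 0 < y) (hr : 1 < r) (hs : 1 < s)
    (hrs : 1 / r + 1 / s = 1) :
    pkBeta p k (x / r + y / s) ≤ pkBeta p k x ^ (1 / r) * pkBeta p k y ^ (1 / s) := by
  have hr0 : 0 < r := lt_trans one_pos hr
  have hs0 : 0 < s := lt_trans one_pos hs
  have hconj : Real.HolderConjugate r s :=
    ⟨by rw [inv_eq_one_div, inv_eq_one_div, inv_one]; exact hrs, hr0, hs0⟩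
  have hxk : 0 < x / k := div_pos hx hk
  have hyk : 0 < y / k := div_pos hy hk
  have hzk : 0 < (x / r + y / s) / k := div_pos (by positivity) hk
  set F : ℝ → ℝ → ℝ := fun u t => t ^ (u / k - 1) / (1 + t) with hF
  have hnn : ∀ u : ℝ, ∀ t ∈ Ioc (0:ℝ) 1, 0 ≤ F u t := by
    intro u t ht
    apply div_nonneg (rpow_nonneg ht.1.le _); linarith [ht.1]
  have hnn' : ∀ u : ℝ,
      0 ≤ᵐ[volume.restrict (Ioc (0:ℝ) 1)] fun t => F u t ^ (1 / r) := by
    intro u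
    filter_upwards [ae_restrict_mem measurableSet_Ioc] with t ht
    exact rpow_nonneg (hnn u t ht) _
  have hnn'' : ∀ u : ℝ,
      0 ≤ᵐ[volume.restrict (Ioc (0:ℝ) 1)] fun t => F u t ^ (1 / s) := by
    intro u
    filter_upwards [ae_restrict_mem measurableSet_Ioc] with t ht
    exact rpow_nonneg (hnn u t ht) _
  have key := MeasureTheory.integral_mul_le_Lp_mul_Lq_of_nonneg
    (μ := volume.restrict (Ioc (0:ℝ) 1)) hconj
    (f := fun t => F x t ^ (1 / r)) (g := fun t => F y t ^ (1 / s))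
    (hnn' x) (hnn'' y) (pkAux_memLp k x r hxk hr0) (pkAux_memLp k y s hyk hs0)
  -- rewrite both sides of `key`
  have hL : (∫ t in Ioc (0:ℝ) 1, F x t ^ (1 / r) * F y t ^ (1 / s))
      = ∫ t in Ioc (0:ℝ) 1, F (x / r + y / s) t := by
    refine setIntegral_congr_fun measurableSet_Ioc fun t ht => ?_
    have ht0 : (0:ℝ) < t := ht.1
    have h1t : (0:ℝ) < 1 + t := by linarith
    have hexp : (x / r + y / s) / k - 1 = (x / k - 1) * (1 / r) + (y / k - 1) * (1 / s) := by
      have h1 : (x / k - 1) * (1 / r) + (y / k - 1) * (1 / s)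
          = (x / r + y / s) / k - (1 / r + 1 / s) := by ring
      rw [h1, hrs]
    simp only [hF]
    rw [div_rpow (rpow_nonneg ht0.le _) h1t.le, div_rpow (rpow_nonneg ht0.le _) h1t.le,
      ← rpow_mul ht0.le, ← rpow_mul ht0.le, div_mul_div_comm, ← rpow_add ht0,
      ← rpow_add h1t, hrs, rpow_one, ← hexp]
  have hRx : (∫ t in Ioc (0:ℝ) 1, (F x t ^ (1 / r)) ^ r) = ∫ t in Ioc (0:ℝ) 1, F x t := by
    refine setIntegral_congr_fun measurableSet_Ioc fun t ht => ?_
    rw [← rpow_mul (hnn x t ht), one_div_mul_cancel hr0.ne', rpow_one]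
  have hRy : (∫ t in Ioc (0:ℝ) 1, (F y t ^ (1 / s)) ^ s) = ∫ t in Ioc (0:ℝ) 1, F y t := by
    refine setIntegral_congr_fun measurableSet_Ioc fun t ht => ?_
    rw [← rpow_mul (hnn y t ht), one_div_mul_cancel hs0.ne', rpow_one]
  rw [hL, hRx, hRy] at key
  -- convert interval integrals to set integrals
  have hInt : ∀ u : ℝ, (∫ t in (0:ℝ)..1, t ^ (u / k - 1) / (1 + t))
      = ∫ t in Ioc (0:ℝ) 1, F u t := fun u =>
    intervalIntegral.integral_of_le zero_le_one
  have hIx : 0 ≤ ∫ t in Ioc (0:ℝ) 1, F x t :=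
    setIntegral_nonneg measurableSet_Ioc (hnn x)
  have hIy : 0 ≤ ∫ t in Ioc (0:ℝ) 1, F y t :=
    setIntegral_nonneg measurableSet_Ioc (hnn y)
  have hpk : (0:ℝ) < p / k := div_pos hp hk
  unfold pkBeta
  rw [hInt, hInt, hInt, mul_rpow hpk.le hIx, mul_rpow hpk.le hIy]
  calc (p / k) * ∫ t in Ioc (0:ℝ) 1, F (x / r + y / s) t
      ≤ (p / k) * ((∫ t in Ioc (0:ℝ) 1, F x t) ^ (1 / r)
          * (∫ t in Ioc (0:ℝ) 1, F y t) ^ (1 / s)) := by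
        exact mul_le_mul_of_nonneg_left key hpk.le
    _ = (p / k) ^ (1 / r) * (∫ t in Ioc (0:ℝ) 1, F x t) ^ (1 / r)
          * ((p / k) ^ (1 / s) * (∫ t in Ioc (0:ℝ) 1, F y t) ^ (1 / s)) := by
        rw [show (p / k) ^ (1 / r) * (∫ t in Ioc (0:ℝ) 1, F x t) ^ (1 / r)
            * ((p / k) ^ (1 / s) * (∫ t in Ioc (0:ℝ) 1, F y t) ^ (1 / s))
            = ((p / k) ^ (1 / r) * (p / k) ^ (1 / s)) * ((∫ t in Ioc (0:ℝ) 1, F x t) ^ (1 / r)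
              * (∫ t in Ioc (0:ℝ) 1, F y t) ^ (1 / s)) by ring,
          ← rpow_add hpk, hrs, rpow_one]
end

section
/- For x > 0, p, k > 0 and n ∈ ℕ, the n-th derivative of the p-k Nielsen beta function satisfies ₚβₖ⁽ⁿ⁾(x + k) = (−1)ⁿ n! p / x^{n+1} − ₚβₖ⁽ⁿ⁾(x). -/
open Real MeasureTheory Set Filter

noncomputable def nbI (w : ℝ → ℝ) (n : ℕ) (s : ℝ) : ℝ :=
  ∫ t in (0:ℝ)..1, Real.log t ^ n * t ^ (s - 1) * w t

lemma pointwise_bound {c : ℝ} (hc : 0 < c) (n : ℕ) {t : ℝ} (ht0 : 0 < t) (ht1 : t ≤ 1) :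
    |Real.log t| ^ n * t ^ (c - 1) ≤ (2 * n / c) ^ n * t ^ (c / 2 - 1) := by
  cases n with
  | zero =>
    simpa using Real.rpow_le_rpow_of_exponent_ge ht0 ht1 (by linarith)
  | succ m =>
    have hn : (0:ℝ) < (m+1 : ℕ) := by positivity
    set N : ℝ := ((m+1 : ℕ) : ℝ)
    have hε : 0 < c / (2 * N) := by positivity
    have hlog : |Real.log t| ≤ t ^ (-(c/(2*N))) / (c/(2*N)) := by
      rw [abs_of_nonpos (Real.log_nonpos ht0.le ht1), ← Real.log_inv]
      calc Real.log t⁻¹ ≤ (t⁻¹) ^ (c/(2*N)) / (c/(2*N)) :=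
            Real.log_le_rpow_div (by positivity) hε
        _ = t ^ (-(c/(2*N))) / (c/(2*N)) := by
            rw [← Real.rpow_neg_one t, ← Real.rpow_mul ht0.le]
            norm_num
    have h1 : |Real.log t| ^ (m+1) ≤ (t ^ (-(c/(2*N))) / (c/(2*N))) ^ (m+1) :=
      pow_le_pow_left₀ (abs_nonneg _) hlog _
    have h2 : (t ^ (-(c/(2*N))) / (c/(2*N))) ^ (m+1) * t ^ (c-1)
        = (2 * (m+1:ℕ) / c) ^ (m+1) * t ^ (c / 2 - 1) := by
      rw [div_pow, div_mul_eq_mul_div, ← Real.rpow_natCast (t ^ (-(c/(2*N)))) (m+1),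
        ← Real.rpow_mul ht0.le]
      have hNe : -(c/(2*N)) * ((m+1:ℕ):ℝ) = -(c/2) := by
        have hN0 : N ≠ 0 := by positivity
        have : ((m+1:ℕ):ℝ) = N := rfl
        rw [this]
        field_simp
      rw [hNe, ← Real.rpow_add ht0]
      have : -(c/2) + (c-1) = c/2 - 1 := by ring
      rw [this, div_eq_mul_inv, mul_comm (t ^ (c/2-1))]
      congr 1
      rw [← inv_pow]
      congr 1
      have hN0 : N ≠ 0 := by positivity
      have hNe2 : ((m+1:ℕ):ℝ) = N := rfl
      rw [hNe2]
      field_simp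
    calc |Real.log t| ^ (m+1) * t ^ (c-1)
        ≤ (t ^ (-(c/(2*N))) / (c/(2*N))) ^ (m+1) * t ^ (c-1) :=
          mul_le_mul_of_nonneg_right h1 (Real.rpow_nonneg ht0.le _)
      _ = (2 * (m+1:ℕ) / c) ^ (m+1) * t ^ (c / 2 - 1) := h2

lemma contOn_integrand {w : ℝ → ℝ} (hw : ContinuousOn w (Ioc 0 1)) (n : ℕ) (s : ℝ) :
    ContinuousOn (fun t => Real.log t ^ n * t ^ (s - 1) * w t) (Ioc 0 1) := by
  apply ContinuousOn.mul _ hw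
  apply ContinuousOn.mul
  · exact (Real.continuousOn_log.mono (fun t ht => by simp [ht.1.ne'])).pow n
  · exact fun t ht => (Real.continuousAt_rpow_const t _ (Or.inl ht.1.ne')).continuousWithinAt

lemma aesm_integrand {w : ℝ → ℝ} (hw : ContinuousOn w (Ioc 0 1)) (n : ℕ) (s : ℝ) :
    AEStronglyMeasurable (fun t => Real.log t ^ n * t ^ (s - 1) * w t)
      (volume.restrict (Ioc 0 1)) :=
  (contOn_integrand hw n s).aestronglyMeasurable measurableSet_Ioc

lemma aux_int {c : ℝ} (hc : 0 < c) (n : ℕ) :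
    IntegrableOn (fun t => |Real.log t| ^ n * t ^ (c - 1)) (Ioc (0:ℝ) 1) volume := by
  have hbd : IntegrableOn (fun t : ℝ => (2 * n / c) ^ n * t ^ (c / 2 - 1)) (Ioc (0:ℝ) 1) volume := by
    have := (intervalIntegral.intervalIntegrable_rpow' (a := 0) (b := 1) (r := c/2 - 1) (by linarith)).const_mul
      ((2 * (n:ℝ) / c) ^ n)
    rwa [intervalIntegrable_iff_integrableOn_Ioc_of_le zero_le_one] at this
  apply hbd.mono'
  · have : ContinuousOn (fun t : ℝ => |Real.log t| ^ n * t ^ (c - 1)) (Ioc 0 1) := by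
      apply ContinuousOn.mul
      · exact ((Real.continuousOn_log.mono (fun t ht => by simp [ht.1.ne'])).abs).pow n
      · exact fun t ht => (Real.continuousAt_rpow_const t _ (Or.inl ht.1.ne')).continuousWithinAt
    exact this.aestronglyMeasurable measurableSet_Ioc
  · filter_upwards [ae_restrict_mem measurableSet_Ioc] with t ht
    have h0 : (0:ℝ) ≤ |Real.log t| ^ n * t ^ (c - 1) :=
      mul_nonneg (pow_nonneg (abs_nonneg _) n) (Real.rpow_nonneg ht.1.le _)
    rw [Real.norm_eq_abs, abs_of_nonneg h0]
    exact pointwise_bound hc n ht.1 ht.2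

lemma integrableOn_integrand {w : ℝ → ℝ} (hw : ContinuousOn w (Ioc 0 1))
    (hwb : ∀ t ∈ Ioc (0:ℝ) 1, |w t| ≤ 1) {s : ℝ} (hs : 0 < s) (n : ℕ) :
    IntegrableOn (fun t => Real.log t ^ n * t ^ (s - 1) * w t) (Ioc (0:ℝ) 1) volume := by
  apply (aux_int hs n).mono' (aesm_integrand hw n s)
  filter_upwards [ae_restrict_mem measurableSet_Ioc] with t ht
  have htp : (0:ℝ) < t ^ (s-1) := Real.rpow_pos_of_pos ht.1 _
  rw [Real.norm_eq_abs, abs_mul, abs_mul, abs_pow, abs_of_pos htp]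
  calc |Real.log t| ^ n * t ^ (s-1) * |w t| ≤ |Real.log t| ^ n * t ^ (s-1) * 1 := by
        exact mul_le_mul_of_nonneg_left (hwb t ht) (by positivity)
    _ = |Real.log t| ^ n * t ^ (s-1) := mul_one _

lemma hasDerivAt_nbI {w : ℝ → ℝ} (hw : ContinuousOn w (Ioc 0 1))
    (hwb : ∀ t ∈ Ioc (0:ℝ) 1, |w t| ≤ 1) (n : ℕ) {s : ℝ} (hs : 0 < s) :
    HasDerivAt (nbI w n) (nbI w (n+1) s) s := by
  have hI : Set.uIoc (0:ℝ) 1 = Ioc 0 1 := uIoc_of_le zero_le_one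
  have main := intervalIntegral.hasDerivAt_integral_of_dominated_loc_of_deriv_le
    (F := fun (x : ℝ) (t : ℝ) => Real.log t ^ n * t ^ (x - 1) * w t)
    (F' := fun (x : ℝ) (t : ℝ) => Real.log t ^ (n+1) * t ^ (x - 1) * w t)
    (x₀ := s) (a := (0:ℝ)) (b := 1) (μ := volume)
    (bound := fun t => |Real.log t| ^ (n+1) * t ^ (s/2 - 1))
    (Metric.ball_mem_nhds s (half_pos hs))
    (Filter.Eventually.of_forall fun x => by rw [hI]; exact aesm_integrand hw n x)
    (by rw [intervalIntegrable_iff, hI]; exact integrableOn_integrand hw hwb hs n)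
    (by rw [hI]; exact aesm_integrand hw (n+1) s)
    (Filter.Eventually.of_forall fun t => ?_)
    (by rw [intervalIntegrable_iff, hI]; exact aux_int (half_pos hs) (n+1))
    (Filter.Eventually.of_forall fun t => ?_)
  · exact main.2
  · -- bound
    rw [hI]
    intro ht x hx
    have hxd := abs_lt.mp (mem_ball_iff_norm.mp hx)
    have hxs : s/2 - 1 ≤ x - 1 := by linarith [hxd.1]
    have h1 : t ^ (x-1) ≤ t ^ (s/2-1) :=
      Real.rpow_le_rpow_of_exponent_ge ht.1 ht.2 hxs
    have htp : (0:ℝ) ≤ t ^ (x-1) := Real.rpow_nonneg ht.1.le _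
    rw [Real.norm_eq_abs, abs_mul, abs_mul, abs_pow, abs_of_nonneg htp]
    calc |Real.log t| ^ (n+1) * t ^ (x-1) * |w t|
        ≤ |Real.log t| ^ (n+1) * t ^ (x-1) * 1 :=
          mul_le_mul_of_nonneg_left (hwb t ht) (mul_nonneg (pow_nonneg (abs_nonneg _) _) htp)
      _ = |Real.log t| ^ (n+1) * t ^ (x-1) := mul_one _
      _ ≤ |Real.log t| ^ (n+1) * t ^ (s/2-1) :=
          mul_le_mul_of_nonneg_left h1 (pow_nonneg (abs_nonneg _) _)
  · -- differentiability
    rw [hI]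
    intro ht x hx
    have h0 : HasDerivAt (fun y : ℝ => t ^ (y - 1)) (t ^ (x-1) * Real.log t) x := by
      have hc := (Real.hasStrictDerivAt_const_rpow ht.1 (x-1)).hasDerivAt
      have := hc.comp x ((hasDerivAt_id x).sub_const 1)
      exact this.congr_deriv (mul_one _)
    have := (h0.const_mul (Real.log t ^ n)).mul_const (w t)
    refine this.congr_deriv ?_
    ring

lemma w1_cont : ContinuousOn (fun t : ℝ => (1 + t)⁻¹) (Ioc 0 1) :=
  (continuous_const.add continuous_id).continuousOn.inv₀ fun t ht => by
    have := ht.1; dsimp; linarith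

lemma w1_bd : ∀ t ∈ Ioc (0:ℝ) 1, |(1 + t)⁻¹| ≤ 1 := by
  intro t ht
  have h1 : (1:ℝ) ≤ 1 + t := by linarith [ht.1]
  rw [abs_of_pos (inv_pos.mpr (by linarith [ht.1]))]
  exact inv_le_one_of_one_le₀ h1

lemma one_cont : ContinuousOn (fun _ : ℝ => (1:ℝ)) (Ioc 0 1) := continuousOn_const

lemma one_bd : ∀ t ∈ Ioc (0:ℝ) 1, |(1:ℝ)| ≤ 1 := fun t _ => by simp

lemma nbI_one : ∀ n : ℕ, ∀ s : ℝ, 0 < s →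
    nbI (fun _ => (1:ℝ)) n s = (-1)^n * (n.factorial : ℝ) / s^(n+1) := by
  intro n
  induction n with
  | zero =>
    intro s hs
    simp only [nbI, pow_zero, one_mul, mul_one]
    have hval := integral_rpow (a := 0) (b := 1) (r := s-1)
      (Or.inl (by linarith))
    rw [hval]
    rw [Real.one_rpow, Real.zero_rpow (by linarith : s - 1 + 1 ≠ 0)]
    simp
  | succ n ih =>
    intro s hs
    have hev : nbI (fun _ => (1:ℝ)) n =ᶠ[nhds s]
        (fun u => (-1)^n * (n.factorial : ℝ) / u^(n+1)) :=
      Filter.eventuallyEq_of_mem (isOpen_Ioi.mem_nhds hs) (fun u hu => ih u hu)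
    have h1 : deriv (nbI (fun _ => (1:ℝ)) n) s = nbI (fun _ => (1:ℝ)) (n+1) s :=
      (hasDerivAt_nbI one_cont one_bd n hs).deriv
    have h2 : HasDerivAt (fun u : ℝ => (-1)^n * (n.factorial : ℝ) / u^(n+1))
        ((-1)^(n+1) * ((n+1).factorial : ℝ) / s^(n+2)) s := by
      have hp : HasDerivAt (fun u : ℝ => u ^ (n+1)) (((n:ℝ)+1) * s^n) s := by
        simpa using hasDerivAt_pow (n+1) s
      have hinv := hp.inv (pow_ne_zero _ hs.ne')
      simp only [div_eq_mul_inv]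
      have := hinv.const_mul ((-1:ℝ)^n * (n.factorial : ℝ))
      refine this.congr_deriv ?_
      rw [Nat.factorial_succ]
      push_cast
      field_simp
      ring
    rw [← h1, hev.deriv_eq, h2.deriv]

lemma nbI_split (n : ℕ) {s : ℝ} (hs : 0 < s) :
    nbI (fun t => (1+t)⁻¹) n (s+1) + nbI (fun t => (1+t)⁻¹) n s
      = nbI (fun _ => (1:ℝ)) n s := by
  have hI : Set.uIoc (0:ℝ) 1 = Ioc 0 1 := uIoc_of_le zero_le_one
  have h1 : IntervalIntegrable (fun t => Real.log t ^ n * t ^ (s+1-1) * (1+t)⁻¹)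
      volume 0 1 := by
    rw [intervalIntegrable_iff, hI]; exact integrableOn_integrand w1_cont w1_bd (by linarith) n
  have h2 : IntervalIntegrable (fun t => Real.log t ^ n * t ^ (s-1) * (1+t)⁻¹)
      volume 0 1 := by
    rw [intervalIntegrable_iff, hI]; exact integrableOn_integrand w1_cont w1_bd hs n
  rw [nbI, nbI, nbI, ← intervalIntegral.integral_add h1 h2]
  apply intervalIntegral.integral_congr_ae
  filter_upwards with t
  intro ht
  rw [hI] at ht
  have ht0 : (0:ℝ) < t := ht.1
  have h1t : (1:ℝ) + t ≠ 0 := by linarith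
  have hts : t ^ (s+1-1) = t ^ (s-1) * t := by
    rw [← Real.rpow_add_one ht0.ne' (s-1)]; ring_nf
  rw [hts]
  field_simp
  ring

lemma pkBeta_eq_nbI (p k y : ℝ) :
    pkBeta p k y = (p / k) * nbI (fun t => (1+t)⁻¹) 0 (y / k) := by
  simp only [pkBeta, nbI, pow_zero, one_mul, div_eq_mul_inv]

lemma iteratedDeriv_pkBeta (p : ℝ) {k : ℝ} (hk : 0 < k) (n : ℕ) :
    ∀ y : ℝ, 0 < y →
      iteratedDeriv n (pkBeta p k) y = (p / k^(n+1)) * nbI (fun t => (1+t)⁻¹) n (y/k) := by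
  induction n with
  | zero =>
    intro y hy
    rw [iteratedDeriv_zero, pkBeta_eq_nbI, pow_one]
  | succ n ih =>
    intro y hy
    rw [iteratedDeriv_succ]
    have hev : iteratedDeriv n (pkBeta p k) =ᶠ[nhds y]
        (fun z => (p / k^(n+1)) * nbI (fun t => (1+t)⁻¹) n (z/k)) :=
      Filter.eventuallyEq_of_mem (isOpen_Ioi.mem_nhds hy) (fun z hz => ih z hz)
    rw [hev.deriv_eq]
    have hyk : 0 < y / k := div_pos hy hk
    have hD : HasDerivAt (fun z : ℝ => nbI (fun t => (1+t)⁻¹) n (z/k))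
        (nbI (fun t => (1+t)⁻¹) (n+1) (y/k) * (1/k)) y := by
      have h1 := hasDerivAt_nbI w1_cont w1_bd n hyk
      have h2 : HasDerivAt (fun z : ℝ => z / k) (1/k) y := by
        simpa using (hasDerivAt_id y).div_const k
      exact h1.comp y h2
    rw [(hD.const_mul (p / k^(n+1))).deriv]
    rw [pow_succ]
    ring

theorem pkBeta_deriv_functional_eq (p k x : ℝ) (hp : 0 < p) (hk : 0 < k)
    (hx : 0 < x) (n : ℕ) :
    iteratedDeriv n (pkBeta p k) (x + k) =
      (-1 : ℝ) ^ n * (n.factorial : ℝ) * p / x ^ (n + 1) -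
        iteratedDeriv n (pkBeta p k) x := by
  have hxk : 0 < x + k := by linarith
  have hxq : 0 < x / k := div_pos hx hk
  rw [iteratedDeriv_pkBeta p hk n (x+k) hxk, iteratedDeriv_pkBeta p hk n x hx]
  have hshift : (x + k) / k = x / k + 1 := by field_simp
  rw [hshift]
  have hsplit := nbI_split n hxq
  have hone := nbI_one n (x/k) hxq
  rw [hone] at hsplit
  have h2 : nbI (fun t => (1+t)⁻¹) n (x/k + 1)
      = (-1)^n * (n.factorial : ℝ) / (x/k)^(n+1) - nbI (fun t => (1+t)⁻¹) n (x/k) := by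
    linarith
  rw [h2]
  have hk0 : k ≠ 0 := hk.ne'
  have hx0 : x ≠ 0 := hx.ne'
  rw [div_pow]
  field_simp
end

section
/- For x, y ≥ 0 and p, k > 0, the inequality ₚβₖ(x + k) · ₚβₖ(y + k) ≤ (p ln 2 / k) · ₚβₖ(x + y + k) holds. -/
open Real MeasureTheory Set

namespace PkBetaAux

noncomputable def J (c : ℝ) : ℝ := ∫ t in Ioc (0:ℝ) 1, t ^ c / (1 + t)

lemma intJ (c : ℝ) (hc : 0 ≤ c) :
    Integrable (fun t : ℝ => t ^ c / (1 + t)) (volume.restrict (Ioc (0:ℝ) 1)) := by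
  apply Measure.integrableOn_of_bounded (M := 1) measure_Ioc_lt_top.ne
  · apply Measurable.aestronglyMeasurable
    fun_prop
  · filter_upwards [ae_restrict_mem measurableSet_Ioc] with t ht
    have h1 : (0:ℝ) < t := ht.1
    have h2 : t ≤ 1 := ht.2
    have hnum : (0:ℝ) ≤ t ^ c := Real.rpow_nonneg h1.le c
    have hden : (1:ℝ) ≤ 1 + t := by linarith
    have : t ^ c / (1 + t) ≤ 1 := by
      rw [div_le_one (by linarith)]
      calc t ^ c ≤ 1 := Real.rpow_le_one h1.le h2 hc
        _ ≤ 1 + t := hden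
    rw [Real.norm_eq_abs, abs_of_nonneg (div_nonneg hnum (by linarith))]
    exact this

lemma J_zero : J 0 = Real.log 2 := by
  have : J 0 = ∫ t in (0:ℝ)..1, 1 / (1 + t) := by
    rw [intervalIntegral.integral_of_le zero_le_one]
    simp [J, Real.rpow_zero]
  rw [this]
  have h : ∀ t : ℝ, 1 / (1 + t) = (fun u : ℝ => 1 / u) (1 + t) := fun t => rfl
  rw [show (fun t : ℝ => 1 / (1 + t)) = (fun t : ℝ => (fun u : ℝ => 1 / u) (1 + t)) from rfl]
  rw [intervalIntegral.integral_comp_add_left (fun u : ℝ => 1 / u) 1]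
  norm_num

lemma key (a b : ℝ) (ha : 0 ≤ a) (hb : 0 ≤ b) :
    J a * J b ≤ Real.log 2 * J (a + b) := by
  set μ := volume.restrict (Ioc (0:ℝ) 1) with hμ
  have hInt : ∀ c : ℝ, 0 ≤ c → Integrable (fun t : ℝ => t ^ c / (1 + t)) μ := fun c hc => intJ c hc
  have hP : ∀ c d : ℝ, 0 ≤ c → 0 ≤ d →
      Integrable (fun z : ℝ × ℝ => (z.1 ^ c / (1 + z.1)) * (z.2 ^ d / (1 + z.2))) (μ.prod μ) :=
    fun c d hc hd => (hInt c hc).mul_prod (hInt d hd)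
  have expand : ∀ c d : ℝ, (∫ z : ℝ × ℝ, (z.1 ^ c / (1 + z.1)) * (z.2 ^ d / (1 + z.2)) ∂(μ.prod μ))
      = J c * J d := fun c d =>
    integral_prod_mul (μ := μ) (ν := μ) (fun t : ℝ => t ^ c / (1 + t))
      (fun t : ℝ => t ^ d / (1 + t))
  have hmem : ∀ᵐ z : ℝ × ℝ ∂(μ.prod μ), z ∈ Ioc (0:ℝ) 1 ×ˢ Ioc (0:ℝ) 1 := by
    rw [hμ, Measure.prod_restrict]
    exact ae_restrict_mem (measurableSet_Ioc.prod measurableSet_Ioc)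
  have h0 : (0:ℝ) ≤ ∫ z : ℝ × ℝ,
      ((z.1 ^ a - z.2 ^ a) * (z.1 ^ b - z.2 ^ b)) / ((1 + z.1) * (1 + z.2)) ∂(μ.prod μ) := by
    apply integral_nonneg_of_ae
    filter_upwards [hmem] with z hz
    obtain ⟨⟨hs0, hs1⟩, ⟨ht0, ht1⟩⟩ := hz
    have hden : (0:ℝ) < (1 + z.1) * (1 + z.2) := by positivity
    apply div_nonneg _ hden.le
    rcases le_total z.1 z.2 with h | h
    · have h1 : z.1 ^ a ≤ z.2 ^ a := Real.rpow_le_rpow hs0.le h ha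
      have h2 : z.1 ^ b ≤ z.2 ^ b := Real.rpow_le_rpow hs0.le h hb
      nlinarith
    · have h1 : z.2 ^ a ≤ z.1 ^ a := Real.rpow_le_rpow ht0.le h ha
      have h2 : z.2 ^ b ≤ z.1 ^ b := Real.rpow_le_rpow ht0.le h hb
      nlinarith
  have heq : (∫ z : ℝ × ℝ,
      ((z.1 ^ a - z.2 ^ a) * (z.1 ^ b - z.2 ^ b)) / ((1 + z.1) * (1 + z.2)) ∂(μ.prod μ))
      = J (a + b) * J 0 - J a * J b - J b * J a + J 0 * J (a + b) := by
    have hae : (fun z : ℝ × ℝ =>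
        ((z.1 ^ a - z.2 ^ a) * (z.1 ^ b - z.2 ^ b)) / ((1 + z.1) * (1 + z.2)))
        =ᵐ[μ.prod μ] (fun z : ℝ × ℝ =>
          (z.1 ^ (a + b) / (1 + z.1)) * (z.2 ^ (0:ℝ) / (1 + z.2))
          - (z.1 ^ a / (1 + z.1)) * (z.2 ^ b / (1 + z.2))
          - (z.1 ^ b / (1 + z.1)) * (z.2 ^ a / (1 + z.2))
          + (z.1 ^ (0:ℝ) / (1 + z.1)) * (z.2 ^ (a + b) / (1 + z.2))) := by
      filter_upwards [hmem] with z hz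
      obtain ⟨⟨hs0, _⟩, ⟨ht0, _⟩⟩ := hz
      have hds : (0:ℝ) < 1 + z.1 := by linarith
      have hdt : (0:ℝ) < 1 + z.2 := by linarith
      rw [Real.rpow_add hs0, Real.rpow_add ht0, Real.rpow_zero, Real.rpow_zero]
      field_simp
      ring
    rw [integral_congr_ae hae]
    have i1 := hP (a + b) 0 (by linarith) le_rfl
    have i2 := hP a b ha hb
    have i3 := hP b a hb ha
    have i4 := hP 0 (a + b) le_rfl (by linarith)
    have i12 : Integrable (fun z : ℝ × ℝ =>
        z.1 ^ (a + b) / (1 + z.1) * (z.2 ^ (0:ℝ) / (1 + z.2))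
        - z.1 ^ a / (1 + z.1) * (z.2 ^ b / (1 + z.2))) (μ.prod μ) := i1.sub i2
    have i123 : Integrable (fun z : ℝ × ℝ =>
        z.1 ^ (a + b) / (1 + z.1) * (z.2 ^ (0:ℝ) / (1 + z.2))
        - z.1 ^ a / (1 + z.1) * (z.2 ^ b / (1 + z.2))
        - z.1 ^ b / (1 + z.1) * (z.2 ^ a / (1 + z.2))) (μ.prod μ) := i12.sub i3
    rw [integral_add i123 i4, integral_sub i12 i3, integral_sub i1 i2,
      expand, expand, expand, expand]
  rw [heq, J_zero] at h0
  linarith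

end PkBetaAux

theorem pkBeta_product_ineq (p k x y : ℝ) (hp : 0 < p) (hk : 0 < k)
    (hx : 0 ≤ x) (hy : 0 ≤ y) :
    pkBeta p k (x + k) * pkBeta p k (y + k) ≤
      p * Real.log 2 / k * pkBeta p k (x + y + k) := by
  have hk0 : k ≠ 0 := hk.ne'
  have e1 : (x + k) / k - 1 = x / k := by field_simp; ring
  have e2 : (y + k) / k - 1 = y / k := by field_simp; ring
  have e3 : (x + y + k) / k - 1 = x / k + y / k := by field_simp; ring
  have hiv : ∀ c : ℝ, (∫ t in (0:ℝ)..1, t ^ c / (1 + t)) = PkBetaAux.J c := fun c =>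
    intervalIntegral.integral_of_le zero_le_one
  unfold pkBeta
  rw [e1, e2, e3, hiv, hiv, hiv]
  have hkey := PkBetaAux.key (x / k) (y / k) (div_nonneg hx hk.le) (div_nonneg hy hk.le)
  have hpk : (0:ℝ) ≤ p / k * (p / k) := by positivity
  calc p / k * PkBetaAux.J (x / k) * (p / k * PkBetaAux.J (y / k))
      = p / k * (p / k) * (PkBetaAux.J (x / k) * PkBetaAux.J (y / k)) := by ring
    _ ≤ p / k * (p / k) * (Real.log 2 * PkBetaAux.J (x / k + y / k)) :=
        mul_le_mul_of_nonneg_left hkey hpk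
    _ = p * Real.log 2 / k * (p / k * PkBetaAux.J (x / k + y / k)) := by ring
end

section
/- For x, y, z > 0 and p, k > 0, one has ₚβₖ(x) · ₚβₖ(x + y + z) − ₚβₖ(x + y) · ₚβₖ(x + z) > 0. -/
open Real MeasureTheory Set

noncomputable def fpk (a t : ℝ) : ℝ := t ^ (a - 1) / (1 + t)

lemma fpk_intOn (a : ℝ) (ha : 0 < a) : IntegrableOn (fpk a) (Ioc (0:ℝ) 1) := by
  have h1 : IntervalIntegrable (fun t : ℝ => t ^ (a - 1)) volume 0 1 :=
    intervalIntegral.intervalIntegrable_rpow' (by linarith)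
  have h2 : ContinuousOn (fun t : ℝ => (1 + t)⁻¹) (uIcc (0:ℝ) 1) := by
    apply ContinuousOn.inv₀ (by fun_prop)
    intro t ht
    rw [uIcc_of_le (by norm_num)] at ht
    nlinarith [ht.1]
  have := h1.mul_continuousOn h2
  rw [intervalIntegrable_iff_integrableOn_Ioc_of_le (by norm_num)] at this
  exact (by simpa [div_eq_mul_inv] using this : IntegrableOn (fun t : ℝ => t ^ (a - 1) / (1 + t)) (Ioc 0 1))

lemma fpk_factor {a b c t s : ℝ} (ht : 0 < t) (hs : 0 < s) :
    fpk a t * fpk (a+b+c) s + fpk (a+b+c) t * fpk a s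
      - (fpk (a+b) t * fpk (a+c) s + fpk (a+c) t * fpk (a+b) s)
    = (t ^ (a-1) * s ^ (a-1) * ((t ^ b - s ^ b) * (t ^ c - s ^ c))) / ((1+t)*(1+s)) := by
  have r : ∀ u : ℝ, 0 < u → ∀ v w : ℝ, u ^ (a + v + w - 1) = u ^ (a-1) * u ^ v * u ^ w := by
    intro u hu v w
    rw [← rpow_add hu, ← rpow_add hu]
    congr 1; ring
  have r2 : ∀ u : ℝ, 0 < u → ∀ v : ℝ, u ^ (a + v - 1) = u ^ (a-1) * u ^ v := by
    intro u hu v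
    rw [← rpow_add hu]
    congr 1; ring
  have h1t : (0:ℝ) < 1 + t := by linarith
  have h1s : (0:ℝ) < 1 + s := by linarith
  simp only [fpk, r t ht, r s hs, r2 t ht, r2 s hs]
  field_simp
  ring

lemma key_s12 (a b c : ℝ) (ha : 0 < a) (hb : 0 < b) (hc : 0 < c) :
    0 < (∫ t in Ioc (0:ℝ) 1, fpk a t) * (∫ t in Ioc (0:ℝ) 1, fpk (a+b+c) t)
      - (∫ t in Ioc (0:ℝ) 1, fpk (a+b) t) * (∫ t in Ioc (0:ℝ) 1, fpk (a+c) t) := by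
  set μ := volume.restrict (Ioc (0:ℝ) 1) with hμ
  set H : ℝ × ℝ → ℝ := fun z =>
    fpk a z.1 * fpk (a+b+c) z.2 + fpk (a+b+c) z.1 * fpk a z.2
      - (fpk (a+b) z.1 * fpk (a+c) z.2 + fpk (a+c) z.1 * fpk (a+b) z.2) with hH
  have Ia := fpk_intOn a ha
  have Iabc := fpk_intOn (a+b+c) (by linarith)
  have Iab := fpk_intOn (a+b) (by linarith)
  have Iac := fpk_intOn (a+c) (by linarith)
  have HInt : Integrable H (μ.prod μ) :=
    ((Ia.mul_prod Iabc).add (Iabc.mul_prod Ia)).sub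
      ((Iab.mul_prod Iac).add (Iac.mul_prod Iab))
  have hval : ∫ z, H z ∂(μ.prod μ)
      = 2 * ((∫ t in Ioc (0:ℝ) 1, fpk a t) * (∫ t in Ioc (0:ℝ) 1, fpk (a+b+c) t)
        - (∫ t in Ioc (0:ℝ) 1, fpk (a+b) t) * (∫ t in Ioc (0:ℝ) 1, fpk (a+c) t)) := by
    have J1 : Integrable (fun z : ℝ × ℝ =>
        fpk a z.1 * fpk (a+b+c) z.2 + fpk (a+b+c) z.1 * fpk a z.2) (μ.prod μ) := by
      exact (Ia.mul_prod Iabc).add (Iabc.mul_prod Ia)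
    have J2 : Integrable (fun z : ℝ × ℝ =>
        fpk (a+b) z.1 * fpk (a+c) z.2 + fpk (a+c) z.1 * fpk (a+b) z.2) (μ.prod μ) := by
      exact (Iab.mul_prod Iac).add (Iac.mul_prod Iab)
    rw [hH]
    rw [integral_sub J1 J2,
      integral_add (Ia.mul_prod Iabc) (Iabc.mul_prod Ia),
      integral_add (Iab.mul_prod Iac) (Iac.mul_prod Iab),
      integral_prod_mul, integral_prod_mul, integral_prod_mul, integral_prod_mul]
    ring
  have hprodmeas : μ.prod μ = (volume.prod volume).restrict (Ioc (0:ℝ) 1 ×ˢ Ioc (0:ℝ) 1) :=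
    Measure.prod_restrict _ _
  have hmem : ∀ᵐ z ∂(μ.prod μ), z ∈ Ioc (0:ℝ) 1 ×ˢ Ioc (0:ℝ) 1 := by
    rw [hprodmeas]
    exact ae_restrict_mem (measurableSet_Ioc.prod measurableSet_Ioc)
  have hnonneg : 0 ≤ᵐ[μ.prod μ] H := by
    filter_upwards [hmem] with z hz
    obtain ⟨⟨ht, _⟩, ⟨hs, _⟩⟩ := hz
    rw [hH]
    simp only
    rw [fpk_factor ht hs]
    apply div_nonneg _ (by positivity)
    apply mul_nonneg (by positivity)
    rcases le_total z.1 z.2 with h | h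
    · have h1 : z.1 ^ b ≤ z.2 ^ b := rpow_le_rpow ht.le h hb.le
      have h2 : z.1 ^ c ≤ z.2 ^ c := rpow_le_rpow ht.le h hc.le
      nlinarith
    · have h1 : z.2 ^ b ≤ z.1 ^ b := rpow_le_rpow hs.le h hb.le
      have h2 : z.2 ^ c ≤ z.1 ^ c := rpow_le_rpow hs.le h hc.le
      nlinarith
  have hsupp : (Ioc (0:ℝ) 1 ×ˢ Ioc (0:ℝ) 1) \ {z : ℝ × ℝ | z.1 = z.2}
      ⊆ Function.support H := by
    rintro z ⟨⟨⟨ht, _⟩, ⟨hs, _⟩⟩, hne⟩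
    simp only [mem_setOf_eq] at hne
    rw [Function.mem_support, hH]
    simp only
    rw [fpk_factor ht hs]
    have hfac : 0 < (z.1 ^ b - z.2 ^ b) * (z.1 ^ c - z.2 ^ c) := by
      rcases lt_or_gt_of_ne hne with h | h
      · have h1 : z.1 ^ b < z.2 ^ b := rpow_lt_rpow ht.le h hb
        have h2 : z.1 ^ c < z.2 ^ c := rpow_lt_rpow ht.le h hc
        nlinarith
      · have h1 : z.2 ^ b < z.1 ^ b := rpow_lt_rpow hs.le h hb
        have h2 : z.2 ^ c < z.1 ^ c := rpow_lt_rpow hs.le h hc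
        nlinarith
    have : 0 < (z.1 ^ (a-1) * z.2 ^ (a-1) * ((z.1 ^ b - z.2 ^ b) * (z.1 ^ c - z.2 ^ c)))
        / ((1+z.1)*(1+z.2)) := by
      apply div_pos _ (by positivity)
      exact mul_pos (by positivity) hfac
    exact ne_of_gt this
  have hdm : MeasurableSet {z : ℝ × ℝ | z.1 = z.2} :=
    measurableSet_eq_fun measurable_fst measurable_snd
  have hdiag0 : (volume.prod volume) {z : ℝ × ℝ | z.1 = z.2} = 0 := by
    rw [Measure.prod_apply hdm]
    have : ∀ x : ℝ, Prod.mk x ⁻¹' {z : ℝ × ℝ | z.1 = z.2} = {x} := by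
      intro x; ext y; simp [eq_comm]
    simp [this]
  have hdiag0' : (μ.prod μ) {z : ℝ × ℝ | z.1 = z.2} = 0 := by
    rw [hprodmeas, Measure.restrict_apply hdm]
    exact measure_mono_null (inter_subset_left) hdiag0
  have hboxpos : 0 < (μ.prod μ) (Ioc (0:ℝ) 1 ×ˢ Ioc (0:ℝ) 1) := by
    rw [hprodmeas, Measure.restrict_apply (measurableSet_Ioc.prod measurableSet_Ioc),
      inter_self, Measure.prod_prod, Real.volume_Ioc]
    norm_num
  have hsupppos : 0 < (μ.prod μ) (Function.support H) := by
    calc 0 < (μ.prod μ) ((Ioc (0:ℝ) 1 ×ˢ Ioc (0:ℝ) 1) \ {z : ℝ × ℝ | z.1 = z.2}) := by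
          rwa [measure_diff_null hdiag0']
      _ ≤ (μ.prod μ) (Function.support H) := measure_mono hsupp
  have := (integral_pos_iff_support_of_nonneg_ae hnonneg HInt).2 hsupppos
  linarith [hval ▸ this]

theorem pkBeta_totally_positive (p k x y z : ℝ) (hp : 0 < p) (hk : 0 < k)
    (hx : 0 < x) (hy : 0 < y) (hz : 0 < z) :
    0 < pkBeta p k x * pkBeta p k (x + y + z) -
      pkBeta p k (x + y) * pkBeta p k (x + z) := by
  have hrw : ∀ w : ℝ, pkBeta p k w = (p / k) * ∫ t in Ioc (0:ℝ) 1, fpk (w / k) t := by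
    intro w
    rw [pkBeta, intervalIntegral.integral_of_le (by norm_num)]
    rfl
  rw [hrw, hrw, hrw, hrw]
  have h1 : (x + y + z) / k = x / k + y / k + z / k := by ring
  have h2 : (x + y) / k = x / k + y / k := by ring
  have h3 : (x + z) / k = x / k + z / k := by ring
  rw [h1, h2, h3]
  have hkey := key_s12 (x / k) (y / k) (z / k) (div_pos hx hk) (div_pos hy hk) (div_pos hz hk)
  have hpk : 0 < p / k := div_pos hp hk
  nlinarith [mul_pos (mul_pos hpk hpk) hkey]
end

section
/- Let c, p, k > 0, α, β ∈ (0,1) with α + β = 1, and let m, n be even nonnegative integers. Then for x, y > 0, the derivatives of the extended Chaudhry-Zubair gamma function satisfy Γ_{CZ:(c,p,k)}^{(αm+βn)}(αx + βy) ≤ [Γ_{CZ:(c,p,k)}^{(m)}(x)]^α · [Γ_{CZ:(c,p,k)}^{(n)}(y)]^β, provided αm + βn is an integer. -/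
open MeasureTheory Real

noncomputable def czDeriv (c p k : ℝ) (n : ℕ) (x : ℝ) : ℝ :=
  ∫ t in Set.Ioi (0:ℝ),
    (Real.log t) ^ n * t ^ (x - 1) * Real.exp (-(t ^ k) / p - c * p / t ^ k)

open scoped ENNReal

section Helpers
open Set

private lemma aux_integrable_rpow_exp {k s b : ℝ} (hk : 0 < k) (hs : -1 < s) (hb : 0 < b) :
    IntegrableOn (fun t : ℝ => t ^ s * Real.exp (-(b * t ^ k))) (Set.Ioi (0:ℝ)) := by
  set q : ℝ := (s + 1) / k - 1 with hq
  have hq1 : -1 < q := by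
    have : 0 < (s + 1) / k := div_pos (by linarith) hk
    rw [hq]; linarith
  have h0 : IntegrableOn (fun u : ℝ => Real.exp (-u) * u ^ q) (Set.Ioi (0:ℝ)) := by
    have := Real.GammaIntegral_convergent (show (0:ℝ) < q + 1 by linarith)
    simpa using this
  have h1 : IntegrableOn (fun u : ℝ => Real.exp (-(b * u)) * (b * u) ^ q) (Set.Ioi (0:ℝ)) := by
    have := (integrableOn_Ioi_comp_mul_left_iff
      (fun u : ℝ => Real.exp (-u) * u ^ q) 0 hb).mpr (by simpa using h0)
    simpa using this
  have h2 := (integrableOn_Ioi_comp_rpow_iff'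
      (fun u : ℝ => Real.exp (-(b * u)) * (b * u) ^ q) hk.ne').mpr h1
  have h3 : IntegrableOn
      (fun t : ℝ => b ^ (-q) * (t ^ (k - 1) * (Real.exp (-(b * t ^ k)) * (b * t ^ k) ^ q)))
      (Set.Ioi (0:ℝ)) := by
    simpa [smul_eq_mul, mul_assoc, IntegrableOn] using h2.const_mul (b ^ (-q))
  refine h3.congr_fun (fun t ht => ?_) measurableSet_Ioi
  have ht' : (0:ℝ) < t := ht
  have htk : (0:ℝ) < t ^ k := rpow_pos_of_pos ht' k
  beta_reduce
  rw [mul_rpow hb.le htk.le, ← Real.rpow_mul ht'.le]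
  rw [show t ^ (k - 1) * (Real.exp (-(b * t ^ k)) * (b ^ q * t ^ (k * q)))
      = b ^ q * (t ^ (k - 1) * t ^ (k * q)) * Real.exp (-(b * t ^ k)) by ring]
  have hsq : k - 1 + k * q = s := by rw [hq]; field_simp; ring
  rw [← Real.rpow_add ht', hsq, Real.rpow_neg hb.le]
  have hbq : b ^ q ≠ 0 := (Real.rpow_pos_of_pos hb q).ne'
  field_simp

private lemma cz_contOn {L : ℝ → ℝ} (hL : ContinuousOn L (Set.Ioi (0:ℝ))) (c p k z : ℝ) (M : ℕ) :
    ContinuousOn (fun t : ℝ => L t ^ M * t ^ (z - 1) * Real.exp (-(t ^ k) / p - c * p / t ^ k))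
      (Set.Ioi (0:ℝ)) := by
  have h2 : ContinuousOn (fun t : ℝ => t ^ (z - 1)) (Set.Ioi (0:ℝ)) :=
    continuousOn_id.rpow_const fun t ht => Or.inl (ne_of_gt ht)
  have h3 : ContinuousOn (fun t : ℝ => t ^ k) (Set.Ioi (0:ℝ)) :=
    continuousOn_id.rpow_const fun t ht => Or.inl (ne_of_gt ht)
  have h4 : ContinuousOn (fun t : ℝ => Real.exp (-(t ^ k) / p - c * p / t ^ k))
      (Set.Ioi (0:ℝ)) :=
    (((h3.neg).div_const p).sub (continuousOn_const.div h3 fun t ht =>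
      (Real.rpow_pos_of_pos ht k).ne')).rexp
  exact ((hL.pow M).mul h2).mul h4

private lemma cz_integrable {c p k : ℝ} (hc : 0 < c) (hp : 0 < p) (hk : 0 < k) (M : ℕ) {z : ℝ}
    (hz : 0 < z) :
    IntegrableOn
      (fun t : ℝ => |Real.log t| ^ M * t ^ (z - 1) * Real.exp (-(t ^ k) / p - c * p / t ^ k))
      (Set.Ioi (0:ℝ)) := by
  set j : ℕ := ⌈(M : ℝ) / k⌉₊ with hj
  have hkj : (M : ℝ) ≤ k * j := by
    rw [hj]
    calc (M:ℝ) = k * ((M:ℝ)/k) := by field_simp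
    _ ≤ k * ⌈(M:ℝ)/k⌉₊ := by gcongr; exact Nat.le_ceil _
  set C : ℝ := (j.factorial : ℝ) / (c * p) ^ j with hC
  have hcp : 0 < c * p := mul_pos hc hp
  have hC0 : 0 < C := div_pos (by positivity) (by positivity)
  have hM0 : (0:ℝ) ≤ M := Nat.cast_nonneg M
  have hint : IntegrableOn (fun t : ℝ =>
      C * (t ^ (z - 1 - M + k * j) * Real.exp (-(p⁻¹ * t ^ k)))
        + t ^ (z - 1 + M) * Real.exp (-(p⁻¹ * t ^ k))) (Set.Ioi (0:ℝ)) := by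
    refine ((aux_integrable_rpow_exp hk (by linarith) (inv_pos.mpr hp)).const_mul C).add
      (aux_integrable_rpow_exp hk (by linarith) (inv_pos.mpr hp))
  have hmeas : AEStronglyMeasurable
      (fun t : ℝ => |Real.log t| ^ M * t ^ (z - 1) * Real.exp (-(t ^ k) / p - c * p / t ^ k))
      (volume.restrict (Set.Ioi (0:ℝ))) :=
    (cz_contOn (Real.continuousOn_log.mono fun t ht =>
      Set.mem_compl_singleton_iff.mpr (ne_of_gt ht)).abs c p k z M).aestronglyMeasurable
      measurableSet_Ioi
  refine hint.mono' hmeas ?_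
  rw [ae_restrict_iff' measurableSet_Ioi]
  refine Filter.Eventually.of_forall fun t ht => ?_
  have ht' : (0:ℝ) < t := ht
  have htk : (0:ℝ) < t ^ k := Real.rpow_pos_of_pos ht' k
  have hE1 : Real.exp (-(t ^ k) / p - c * p / t ^ k)
      = Real.exp (-(p⁻¹ * t ^ k)) * Real.exp (-(c * p / t ^ k)) := by
    rw [← Real.exp_add]; congr 1; field_simp; ring
  have hu : (0:ℝ) < c * p / t ^ k := by positivity
  have hnn : (0:ℝ) ≤ |Real.log t| ^ M * t ^ (z - 1)
      * Real.exp (-(t ^ k) / p - c * p / t ^ k) := by positivity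
  rw [Real.norm_eq_abs, abs_of_nonneg hnn]
  rcases le_total t 1 with h1 | h1
  · -- small t
    have hlog : |Real.log t| ≤ t⁻¹ := by
      rw [abs_of_nonpos (Real.log_nonpos ht'.le h1), ← Real.log_inv]
      have := Real.log_le_sub_one_of_pos (inv_pos.mpr ht')
      linarith
    have hlogM : |Real.log t| ^ M ≤ t ^ (-(M:ℝ)) := by
      rw [Real.rpow_neg ht'.le, Real.rpow_natCast, ← inv_pow]
      exact pow_le_pow_left₀ (abs_nonneg _) hlog M
    have hexp : Real.exp (-(c * p / t ^ k)) ≤ C * t ^ (k * (j:ℝ)) := by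
      have h5 : (c * p / t ^ k) ^ j / (j.factorial : ℝ)
          ≤ Real.exp (c * p / t ^ k) := Real.pow_div_factorial_le_exp _ hu.le j
      have h6 : Real.exp (-(c * p / t ^ k)) ≤ ((c * p / t ^ k) ^ j / (j.factorial : ℝ))⁻¹ := by
        rw [Real.exp_neg]
        exact inv_anti₀ (by positivity) h5
      refine h6.trans (le_of_eq ?_)
      have htkj : ((t ^ k) ^ j : ℝ) = t ^ (k * (j:ℝ)) := by
        rw [← Real.rpow_natCast (t ^ k) j, ← Real.rpow_mul ht'.le]
      rw [div_pow, hC, ← htkj]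
      have h7 : ((t ^ k) ^ j : ℝ) ≠ 0 := by positivity
      have h8 : ((c * p) ^ j : ℝ) ≠ 0 := by positivity
      have h9 : ((j.factorial : ℝ)) ≠ 0 := by positivity
      field_simp
    calc |Real.log t| ^ M * t ^ (z - 1) * Real.exp (-(t ^ k) / p - c * p / t ^ k)
        ≤ t ^ (-(M:ℝ)) * t ^ (z - 1)
          * (Real.exp (-(p⁻¹ * t ^ k)) * (C * t ^ (k * (j:ℝ)))) := by
          rw [hE1]
          gcongr <;> positivity
      _ = C * (t ^ (z - 1 - M + k * j) * Real.exp (-(p⁻¹ * t ^ k))) := by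
          rw [show z - 1 - M + k * (j:ℝ) = -(M:ℝ) + (z-1) + k * (j:ℝ) by ring,
            Real.rpow_add ht', Real.rpow_add ht']
          ring
      _ ≤ _ := by
          have : (0:ℝ) ≤ t ^ (z - 1 + M) * Real.exp (-(p⁻¹ * t ^ k)) := by positivity
          linarith
  · -- large t
    have hlog : |Real.log t| ≤ t := by
      rw [abs_of_nonneg (Real.log_nonneg h1)]
      have := Real.log_le_sub_one_of_pos ht'
      linarith
    have hlogM : |Real.log t| ^ M ≤ t ^ (M:ℝ) := by
      rw [Real.rpow_natCast]
      exact pow_le_pow_left₀ (abs_nonneg _) hlog M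
    have hexp : Real.exp (-(c * p / t ^ k)) ≤ 1 := by
      rw [Real.exp_le_one_iff]; linarith
    calc |Real.log t| ^ M * t ^ (z - 1) * Real.exp (-(t ^ k) / p - c * p / t ^ k)
        ≤ t ^ (M:ℝ) * t ^ (z - 1) * (Real.exp (-(p⁻¹ * t ^ k)) * 1) := by
          rw [hE1]
          gcongr <;> positivity
      _ = t ^ (z - 1 + M) * Real.exp (-(p⁻¹ * t ^ k)) := by
          rw [show z - 1 + (M:ℝ) = (M:ℝ) + (z-1) by ring, Real.rpow_add ht']
          ring
      _ ≤ _ := by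
          have : (0:ℝ) ≤ C * (t ^ (z - 1 - M + k * j) * Real.exp (-(p⁻¹ * t ^ k))) := by
            positivity
          linarith

end Helpers

theorem czDeriv_logConvex (c p k α β : ℝ) (hc : 0 < c) (hp : 0 < p) (hk : 0 < k)
    (hα : α ∈ Set.Ioo (0:ℝ) 1) (hβ : β ∈ Set.Ioo (0:ℝ) 1) (hαβ : α + β = 1)
    (m n N : ℕ) (hm : Even m) (hn : Even n) (hN : (N : ℝ) = α * m + β * n)
    (x y : ℝ) (hx : 0 < x) (hy : 0 < y) :
    czDeriv c p k N (α * x + β * y) ≤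
      czDeriv c p k m x ^ α * czDeriv c p k n y ^ β := by
  obtain ⟨hα0, hα1⟩ := hα
  obtain ⟨hβ0, hβ1⟩ := hβ
  have hw : 0 < α * x + β * y := by positivity
  set w : ℝ := α * x + β * y with hwdef
  -- notation
  set E : ℝ → ℝ := fun t => Real.exp (-(t ^ k) / p - c * p / t ^ k) with hEdef
  have hE0 : ∀ t, 0 < E t := fun t => Real.exp_pos _
  set G : ℕ → ℝ → ℝ → ℝ := fun M z t => |Real.log t| ^ M * t ^ (z - 1) * E t with hGdef
  have hGnn : ∀ M z t, 0 < t → 0 ≤ G M z t := fun M z t ht => by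
    have := (hE0 t).le
    have h2 : (0:ℝ) ≤ t ^ (z - 1) := Real.rpow_nonneg ht.le _
    positivity
  have habs : ContinuousOn (fun t : ℝ => |Real.log t|) (Set.Ioi (0:ℝ)) :=
    (Real.continuousOn_log.mono fun t ht => Set.mem_compl_singleton_iff.mpr (ne_of_gt ht)).abs
  have hlogC : ContinuousOn Real.log (Set.Ioi (0:ℝ)) :=
    Real.continuousOn_log.mono fun t ht => Set.mem_compl_singleton_iff.mpr (ne_of_gt ht)
  have hmeasG : ∀ (M : ℕ) (z : ℝ), AEStronglyMeasurable (G M z)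
      (volume.restrict (Set.Ioi (0:ℝ))) := fun M z =>
    (cz_contOn habs c p k z M).aestronglyMeasurable measurableSet_Ioi
  have hIm := cz_integrable hc hp hk m hx
  have hIn := cz_integrable hc hp hk n hy
  have hIN := cz_integrable hc hp hk N hw
  -- lintegrals
  set A : ℝ≥0∞ := ∫⁻ t in Set.Ioi (0:ℝ), ENNReal.ofReal (G m x t) with hAdef
  set B : ℝ≥0∞ := ∫⁻ t in Set.Ioi (0:ℝ), ENNReal.ofReal (G n y t) with hBdef
  set L : ℝ≥0∞ := ∫⁻ t in Set.Ioi (0:ℝ), ENNReal.ofReal (G N w t) with hLdef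
  have haeG : ∀ (M : ℕ) (z : ℝ), 0 ≤ᵐ[volume.restrict (Set.Ioi (0:ℝ))] G M z := fun M z => by
    filter_upwards [ae_restrict_mem measurableSet_Ioi] with t ht
    exact hGnn M z t ht
  have hAne : A ≠ ⊤ := by
    have := hIm.2
    rw [hasFiniteIntegral_iff_ofReal (haeG m x)] at this
    exact this.ne
  have hBne : B ≠ ⊤ := by
    have := hIn.2
    rw [hasFiniteIntegral_iff_ofReal (haeG n y)] at this
    exact this.ne
  -- integral = toReal of lintegral
  have hInt : ∀ (M : ℕ) (z : ℝ),
      ∫ t in Set.Ioi (0:ℝ), G M z t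
        = (∫⁻ t in Set.Ioi (0:ℝ), ENNReal.ofReal (G M z t)).toReal := fun M z =>
    integral_eq_lintegral_of_nonneg_ae (haeG M z) (hmeasG M z)
  -- Hölder
  have hpq : Real.HolderConjugate (1/α) (1/β) :=
    Real.holderConjugate_one_div hα0 hβ0 hαβ
  have hfa : AEMeasurable (fun t => ENNReal.ofReal (G m x t) ^ α)
      (volume.restrict (Set.Ioi (0:ℝ))) :=
    ((hmeasG m x).aemeasurable.ennreal_ofReal).pow_const α
  have hfb : AEMeasurable (fun t => ENNReal.ofReal (G n y t) ^ β)
      (volume.restrict (Set.Ioi (0:ℝ))) :=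
    ((hmeasG n y).aemeasurable.ennreal_ofReal).pow_const β
  have hHolder := ENNReal.lintegral_mul_le_Lp_mul_Lq (volume.restrict (Set.Ioi (0:ℝ)))
    hpq hfa hfb
  have hkey : L ≤ A ^ α * B ^ β := by
    have hL' : L = ∫⁻ t in Set.Ioi (0:ℝ),
        (ENNReal.ofReal (G m x t) ^ α * ENNReal.ofReal (G n y t) ^ β) := by
      rw [hLdef]
      refine lintegral_congr_ae ?_
      filter_upwards [ae_restrict_mem measurableSet_Ioi] with t ht
      have ht' : (0:ℝ) < t := ht
      have hwx : (x-1)*α + (y-1)*β = w - 1 := by rw [hwdef]; linarith [hαβ]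
      -- pointwise identity
      have hs : (m:ℝ) * α + (n:ℝ) * β = (N:ℝ) := by rw [hN]; ring
      rw [ENNReal.ofReal_rpow_of_nonneg (hGnn m x t ht') hα0.le,
        ENNReal.ofReal_rpow_of_nonneg (hGnn n y t ht') hβ0.le,
        ← ENNReal.ofReal_mul (Real.rpow_nonneg (hGnn m x t ht') α)]
      congr 1
      symm
      rw [hGdef]
      simp only
      rw [Real.mul_rpow (by positivity) (hE0 t).le, Real.mul_rpow (by positivity)
          (Real.rpow_nonneg ht'.le _),
        Real.mul_rpow (by positivity) (hE0 t).le, Real.mul_rpow (by positivity)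
          (Real.rpow_nonneg ht'.le _),
        ← Real.rpow_natCast |Real.log t| m, ← Real.rpow_natCast |Real.log t| n,
        ← Real.rpow_mul (abs_nonneg _), ← Real.rpow_mul (abs_nonneg _),
        ← Real.rpow_mul ht'.le, ← Real.rpow_mul ht'.le,
        ← Real.exp_mul, ← Real.exp_mul]
      have hmα : 0 ≤ (m:ℝ) * α := by positivity
      have hnβ : 0 ≤ (n:ℝ) * β := by positivity
      rw [show |Real.log t| ^ ((m:ℝ)*α) * t ^ ((x-1)*α)
              * Real.exp ((-(t ^ k) / p - c * p / t ^ k) * α)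
              * (|Real.log t| ^ ((n:ℝ)*β) * t ^ ((y-1)*β)
              * Real.exp ((-(t ^ k) / p - c * p / t ^ k) * β))
            = (|Real.log t| ^ ((m:ℝ)*α) * |Real.log t| ^ ((n:ℝ)*β))
              * (t ^ ((x-1)*α) * t ^ ((y-1)*β))
              * (Real.exp ((-(t ^ k) / p - c * p / t ^ k) * α)
                * Real.exp ((-(t ^ k) / p - c * p / t ^ k) * β)) by ring,
        ← Real.rpow_add_of_nonneg (abs_nonneg _) hmα hnβ, ← Real.rpow_add ht', ← Real.exp_add,
        hs, Real.rpow_natCast, hwx, ← mul_add, hαβ, mul_one]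
    rw [hL']
    calc (∫⁻ t in Set.Ioi (0:ℝ),
        (ENNReal.ofReal (G m x t) ^ α * ENNReal.ofReal (G n y t) ^ β))
        ≤ (∫⁻ t in Set.Ioi (0:ℝ), (ENNReal.ofReal (G m x t) ^ α) ^ (1/α)) ^ (1/(1/α))
          * (∫⁻ t in Set.Ioi (0:ℝ), (ENNReal.ofReal (G n y t) ^ β) ^ (1/β)) ^ (1/(1/β)) := by
          simpa using hHolder
      _ = A ^ α * B ^ β := by
          rw [one_div_one_div, one_div_one_div]
          congr 1
          · congr 1
            refine lintegral_congr fun t => ?_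
            rw [← ENNReal.rpow_mul, mul_one_div_cancel hα0.ne', ENNReal.rpow_one]
          · congr 1
            refine lintegral_congr fun t => ?_
            rw [← ENNReal.rpow_mul, mul_one_div_cancel hβ0.ne', ENNReal.rpow_one]
  -- now back to real integrals
  have hstep1 : czDeriv c p k N w ≤ ∫ t in Set.Ioi (0:ℝ), G N w t := by
    unfold czDeriv
    refine setIntegral_mono_on ?_ hIN measurableSet_Ioi fun t ht => ?_
    · refine hIN.mono' ((cz_contOn hlogC c p k w N).aestronglyMeasurable measurableSet_Ioi) ?_
      filter_upwards [ae_restrict_mem measurableSet_Ioi] with t ht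
      have ht' : (0:ℝ) < t := ht
      rw [Real.norm_eq_abs, abs_mul, abs_mul, abs_pow,
        abs_of_nonneg (Real.rpow_nonneg ht'.le _), abs_of_nonneg (Real.exp_nonneg _)]
    · have ht' : (0:ℝ) < t := ht
      have h1 : Real.log t ^ N ≤ |Real.log t| ^ N := by
        calc Real.log t ^ N ≤ |Real.log t ^ N| := le_abs_self _
        _ = |Real.log t| ^ N := abs_pow _ _
      have h2 : (0:ℝ) ≤ t ^ (w - 1) := Real.rpow_nonneg ht'.le _
      have h3 := (hE0 t).le
      calc Real.log t ^ N * t ^ (w-1) * E t ≤ |Real.log t| ^ N * t ^ (w-1) * E t := by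
            gcongr
        _ = G N w t := rfl
  have hm' : czDeriv c p k m x = ∫ t in Set.Ioi (0:ℝ), G m x t := by
    unfold czDeriv
    refine setIntegral_congr_fun measurableSet_Ioi fun t ht => ?_
    rw [hGdef]; simp only; rw [hm.pow_abs]
  have hn' : czDeriv c p k n y = ∫ t in Set.Ioi (0:ℝ), G n y t := by
    unfold czDeriv
    refine setIntegral_congr_fun measurableSet_Ioi fun t ht => ?_
    rw [hGdef]; simp only; rw [hn.pow_abs]
  have hfin : A ^ α * B ^ β ≠ ⊤ :=
    ENNReal.mul_ne_top (ENNReal.rpow_ne_top_of_nonneg hα0.le hAne)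
      (ENNReal.rpow_ne_top_of_nonneg hβ0.le hBne)
  calc czDeriv c p k N w ≤ ∫ t in Set.Ioi (0:ℝ), G N w t := hstep1
    _ = L.toReal := by rw [hInt N w, hLdef]
    _ ≤ (A ^ α * B ^ β).toReal := ENNReal.toReal_mono hfin hkey
    _ = A.toReal ^ α * B.toReal ^ β := by
        rw [ENNReal.toReal_mul, ENNReal.toReal_rpow, ENNReal.toReal_rpow]
    _ = czDeriv c p k m x ^ α * czDeriv c p k n y ^ β := by
        rw [hm', hn', hInt m x, hInt n y, hAdef, hBdef]
end

section
/- Let c, p, k > 0, α, β ∈ (0,1) with α + β = 1, and x, y > 0. Then the extended Chaudhry-Zubair gamma function satisfies Γ_{CZ:(c,p,k)}(x + y) ≤ [Γ_{CZ:(c,p,k)}(x/α)]^α · [Γ_{CZ:(c,p,k)}(y/β)]^β. -/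
open MeasureTheory Real

noncomputable def czGamma (c p k : ℝ) (x : ℝ) : ℝ :=
  ∫ t in Set.Ioi (0:ℝ), t ^ (x - 1) * Real.exp (-(t ^ k) / p - c * p / t ^ k)

lemma czContOn (c p k s : ℝ) (hk : 0 < k) :
    ContinuousOn (fun t : ℝ => t ^ (s - 1) * Real.exp (-(t ^ k) / p - c * p / t ^ k))
      (Set.Ioi 0) := by
  intro t ht
  have ht' : (0:ℝ) < t := ht
  have h1 : ContinuousAt (fun t : ℝ => t ^ k) t :=
    Real.continuousAt_rpow_const t k (Or.inl ht'.ne')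
  have h2 : ContinuousAt (fun t : ℝ => -(t ^ k) / p - c * p / t ^ k) t :=
    ((h1.neg.div_const p).sub
      (continuousAt_const.div h1 (ne_of_gt (Real.rpow_pos_of_pos ht' k))))
  exact ((Real.continuousAt_rpow_const t _ (Or.inl ht'.ne')).mul
    (Real.continuous_exp.continuousAt.comp h2)).continuousWithinAt

lemma czNonneg (c p k s : ℝ) :
    ∀ t ∈ Set.Ioi (0:ℝ), 0 ≤ t ^ (s - 1) * Real.exp (-(t ^ k) / p - c * p / t ^ k) := by
  intro t ht
  exact mul_nonneg (Real.rpow_nonneg (le_of_lt ht) _) (Real.exp_pos _).le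

lemma czIntegrableOn {c p k : ℝ} (hc : 0 < c) (hp : 0 < p) (hk : 0 < k) {s : ℝ} (hs : 0 < s) :
    IntegrableOn (fun t : ℝ => t ^ (s - 1) * Real.exp (-(t ^ k) / p - c * p / t ^ k))
      (Set.Ioi 0) := by
  have hmaj : IntegrableOn (fun t : ℝ => t ^ (s - 1) * Real.exp (-(1/p) * t ^ k))
      (Set.Ioi 0) := by
    have hbase : IntegrableOn
        (fun u : ℝ => u ^ (s/k - 1) * Real.exp (-(1/p) * u)) (Set.Ioi 0) := by
      have := integrableOn_rpow_mul_exp_neg_mul_rpow (s := s/k - 1) (p := 1) (b := 1/p)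
        (by have : 0 < s / k := div_pos hs hk; linarith) one_pos (by positivity)
      simpa [Real.rpow_one] using this
    have h := (integrableOn_Ioi_comp_rpow_iff'
      (fun u : ℝ => u ^ (s/k - 1) * Real.exp (-(1/p) * u)) (ne_of_gt hk)).mpr hbase
    refine h.congr_fun (fun t ht => ?_) measurableSet_Ioi
    have ht' : (0:ℝ) < t := ht
    have hpow : (t ^ k) ^ (s/k - 1) = t ^ (s - k) := by
      rw [← Real.rpow_mul ht'.le]
      congr 1
      field_simp
    simp only [smul_eq_mul]
    rw [hpow, ← mul_assoc, ← Real.rpow_add ht']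
    congr 2
    ring
  refine hmaj.mono' ((czContOn c p k s hk).aestronglyMeasurable measurableSet_Ioi) ?_
  filter_upwards [ae_restrict_mem measurableSet_Ioi] with t ht
  have ht' : (0:ℝ) < t := ht
  have hb : -(t ^ k) / p - c * p / t ^ k ≤ -(1/p) * t ^ k := by
    have h1 : 0 ≤ c * p / t ^ k :=
      div_nonneg (by positivity) (Real.rpow_pos_of_pos ht' k).le
    have h2 : -(t ^ k) / p = -(1/p) * t ^ k := by ring
    linarith [h2.ge, h2.le]
  rw [Real.norm_eq_abs, abs_of_nonneg (czNonneg c p k s t ht)]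
  exact mul_le_mul_of_nonneg_left (Real.exp_le_exp.mpr hb) (Real.rpow_nonneg ht'.le _)

theorem czGamma_superadditive_ineq (c p k α β : ℝ) (hc : 0 < c) (hp : 0 < p)
    (hk : 0 < k) (hα : α ∈ Set.Ioo (0:ℝ) 1) (hβ : β ∈ Set.Ioo (0:ℝ) 1)
    (hαβ : α + β = 1) (x y : ℝ) (hx : 0 < x) (hy : 0 < y) :
    czGamma c p k (x + y) ≤
      czGamma c p k (x / α) ^ α * czGamma c p k (y / β) ^ β := by
  obtain ⟨hα0, hα1⟩ := hα
  obtain ⟨hβ0, hβ1⟩ := hβ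
  set w : ℝ → ℝ := fun t => Real.exp (-(t ^ k) / p - c * p / t ^ k) with hw
  set μ := volume.restrict (Set.Ioi (0:ℝ)) with hμ
  set f₀ : ℝ → ℝ := fun t => t ^ (x + y - 1) * w t with hf₀
  set f₁ : ℝ → ℝ := fun t => t ^ (x / α - 1) * w t with hf₁
  set f₂ : ℝ → ℝ := fun t => t ^ (y / β - 1) * w t with hf₂
  have m₀ : AEStronglyMeasurable f₀ μ :=
    (czContOn c p k (x + y) hk).aestronglyMeasurable measurableSet_Ioi
  have m₁ : AEStronglyMeasurable f₁ μ :=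
    (czContOn c p k (x / α) hk).aestronglyMeasurable measurableSet_Ioi
  have m₂ : AEStronglyMeasurable f₂ μ :=
    (czContOn c p k (y / β) hk).aestronglyMeasurable measurableSet_Ioi
  have n₀ : 0 ≤ᵐ[μ] f₀ := by
    filter_upwards [ae_restrict_mem measurableSet_Ioi] with t ht
    exact czNonneg c p k (x + y) t ht
  have n₁ : 0 ≤ᵐ[μ] f₁ := by
    filter_upwards [ae_restrict_mem measurableSet_Ioi] with t ht
    exact czNonneg c p k (x / α) t ht
  have n₂ : 0 ≤ᵐ[μ] f₂ := by
    filter_upwards [ae_restrict_mem measurableSet_Ioi] with t ht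
    exact czNonneg c p k (y / β) t ht
  have i₁ : Integrable f₁ μ := czIntegrableOn hc hp hk (div_pos hx hα0)
  have i₂ : Integrable f₂ μ := czIntegrableOn hc hp hk (div_pos hy hβ0)
  set L₀ := ∫⁻ t, ENNReal.ofReal (f₀ t) ∂μ with hL₀
  set L₁ := ∫⁻ t, ENNReal.ofReal (f₁ t) ∂μ with hL₁
  set L₂ := ∫⁻ t, ENNReal.ofReal (f₂ t) ∂μ with hL₂
  have hL₁top : L₁ ≠ ⊤ := (lintegral_ofReal_ne_top_iff_integrable m₁ n₁).mpr i₁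
  have hL₂top : L₂ ≠ ⊤ := (lintegral_ofReal_ne_top_iff_integrable m₂ n₂).mpr i₂
  -- Hölder's inequality
  have hconj : Real.HolderConjugate (1/α) (1/β) := by
    constructor
    · simp [hαβ]
    · exact one_div_pos.mpr hα0
    · exact one_div_pos.mpr hβ0
  have hFmeas : AEMeasurable (fun t => ENNReal.ofReal (f₁ t) ^ α) μ :=
    (m₁.aemeasurable.ennreal_ofReal).pow aemeasurable_const
  have hGmeas : AEMeasurable (fun t => ENNReal.ofReal (f₂ t) ^ β) μ :=
    (m₂.aemeasurable.ennreal_ofReal).pow aemeasurable_const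
  have key := ENNReal.lintegral_mul_le_Lp_mul_Lq μ hconj hFmeas hGmeas
  -- simplify the inner exponents
  have hrw₁ : (fun t => (ENNReal.ofReal (f₁ t) ^ α) ^ (1/α)) =
      fun t => ENNReal.ofReal (f₁ t) := by
    funext t
    rw [← ENNReal.rpow_mul, mul_one_div, div_self hα0.ne', ENNReal.rpow_one]
  have hrw₂ : (fun t => (ENNReal.ofReal (f₂ t) ^ β) ^ (1/β)) =
      fun t => ENNReal.ofReal (f₂ t) := by
    funext t
    rw [← ENNReal.rpow_mul, mul_one_div, div_self hβ0.ne', ENNReal.rpow_one]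
  -- identify the product integrand with f₀
  have hprod : (fun t => (ENNReal.ofReal (f₁ t) ^ α) * (ENNReal.ofReal (f₂ t) ^ β)) =ᵐ[μ]
      fun t => ENNReal.ofReal (f₀ t) := by
    filter_upwards [ae_restrict_mem measurableSet_Ioi] with t ht
    have ht' : (0:ℝ) < t := ht
    have h1 : 0 ≤ f₁ t := czNonneg c p k (x / α) t ht
    have h2 : 0 ≤ f₂ t := czNonneg c p k (y / β) t ht
    rw [ENNReal.ofReal_rpow_of_nonneg h1 hα0.le,
        ENNReal.ofReal_rpow_of_nonneg h2 hβ0.le,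
        ← ENNReal.ofReal_mul (Real.rpow_nonneg h1 α)]
    congr 1
    -- real computation
    have hwpos : 0 < w t := Real.exp_pos _
    rw [hf₁, hf₂, hf₀]
    simp only
    rw [Real.mul_rpow (Real.rpow_nonneg ht'.le _) hwpos.le,
        Real.mul_rpow (Real.rpow_nonneg ht'.le _) hwpos.le,
        ← Real.rpow_mul ht'.le, ← Real.rpow_mul ht'.le, hw]
    simp only
    rw [← Real.exp_mul, ← Real.exp_mul,
        mul_mul_mul_comm, ← Real.rpow_add ht', ← Real.exp_add,
        ← mul_add, hαβ, mul_one]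
    congr 1
    field_simp
    congr 1
    linarith
  have key2 : L₀ ≤ L₁ ^ α * L₂ ^ β := by
    have e0 : ∫⁻ t, ((fun t => ENNReal.ofReal (f₁ t) ^ α) *
        (fun t => ENNReal.ofReal (f₂ t) ^ β)) t ∂μ = L₀ := by
      rw [hL₀]
      exact lintegral_congr_ae hprod
    rw [e0] at key
    rw [hrw₁, hrw₂] at key
    simpa [one_div_one_div] using key
  -- pass to real numbers
  have hRtop : L₁ ^ α * L₂ ^ β ≠ ⊤ := by
    apply ENNReal.mul_ne_top
    · exact ENNReal.rpow_ne_top_of_nonneg hα0.le hL₁top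
    · exact ENNReal.rpow_ne_top_of_nonneg hβ0.le hL₂top
  have e₀ : czGamma c p k (x + y) = L₀.toReal := by
    rw [czGamma, integral_eq_lintegral_of_nonneg_ae n₀ m₀]
  have e₁ : czGamma c p k (x / α) = L₁.toReal := by
    rw [czGamma, integral_eq_lintegral_of_nonneg_ae n₁ m₁]
  have e₂ : czGamma c p k (y / β) = L₂.toReal := by
    rw [czGamma, integral_eq_lintegral_of_nonneg_ae n₂ m₂]
  rw [e₀, e₁, e₂, ENNReal.toReal_rpow, ENNReal.toReal_rpow, ← ENNReal.toReal_mul]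
  exact ENNReal.toReal_mono hRtop key2
end
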